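/- Let u > 1 and M > 0 be real and suppose π(e^u) - li(e^u) > M. Then for every integer n with 0 ≤ n ≤ ⌊M·u⌋, π(⌊e^u⌋ + n) > li(⌊e^u⌋ + n); i.e., π(x) - li(x) stays positive for at least ⌊M·u⌋ consecutive integers x starting at ⌊e^u⌋. -/
import Mathlib


/-- The prime counting function on the reals. -/
noncomputable def primePi (x : ℝ) : ℝ := Nat.primeCounting ⌊x⌋₊

/-- The logarithmic integral li(x), normalized so that li(2) ≈ 1.04516378011749278. -/
noncomputable def li (x : ℝ) : ℝ :=
  1.04516378011749278 + ∫ t in (2:ℝ)..x, 1 / Real.log t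

lemma intervalIntegrable_one_div_log {a b : ℝ} (ha : 1 < a) (hb : 1 < b) :
    IntervalIntegrable (fun t : ℝ => 1 / Real.log t) MeasureTheory.volume a b := by
  apply ContinuousOn.intervalIntegrable
  intro t ht
  have ht1 : 1 < t := lt_of_lt_of_le (lt_min ha hb) ht.1
  have hlog : Real.log t ≠ 0 := ne_of_gt (Real.log_pos ht1)
  exact (continuousAt_const.div (Real.continuousAt_log (by linarith)) hlog).continuousWithinAt

theorem pi_gt_li_consecutive (u M : ℝ) (hu : u > 1) (hM : M > 0)
    (h : primePi (Real.exp u) - li (Real.exp u) > M) :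
    ∀ n : ℕ, n ≤ ⌊M * u⌋₊ →
      primePi ((⌊Real.exp u⌋₊ : ℝ) + n) > li ((⌊Real.exp u⌋₊ : ℝ) + n) := by
  intro n hn
  set N : ℝ := Real.exp u with hNdef
  have hu0 : (0:ℝ) < u := by linarith
  have he : (2:ℝ) < Real.exp 1 := by
    have := Real.exp_one_gt_d9; linarith
  have hN2 : (2:ℝ) < N := lt_trans he (Real.exp_lt_exp.mpr hu)
  have hN0 : (0:ℝ) ≤ N := by linarith
  have hfloor_le : (⌊N⌋₊ : ℝ) ≤ N := Nat.floor_le hN0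
  have hfloor2 : (2:ℝ) ≤ (⌊N⌋₊ : ℝ) := by
    exact_mod_cast Nat.le_floor (by exact_mod_cast hN2.le : ((2:ℕ):ℝ) ≤ N)
  set x : ℝ := (⌊N⌋₊ : ℝ) + n with hxdef
  have hx2 : (2:ℝ) ≤ x := by
    have : (0:ℝ) ≤ (n:ℝ) := Nat.cast_nonneg n
    linarith
  have hxle : x ≤ N + n := by linarith
  -- prime counting part
  have hpi : primePi N ≤ primePi x := by
    have hxfloor : ⌊x⌋₊ = ⌊N⌋₊ + n := by
      rw [hxdef]
      rw [show (⌊N⌋₊ : ℝ) + n = ((⌊N⌋₊ + n : ℕ) : ℝ) by push_cast; ring]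
      exact Nat.floor_natCast _
    unfold primePi
    rw [hxfloor]
    exact_mod_cast Nat.monotone_primeCounting (Nat.le_add_right _ _)
  -- li part
  have hint : li x - li N = ∫ t in N..x, 1 / Real.log t := by
    have h1 := intervalIntegrable_one_div_log (a := 2) (b := N) (by norm_num) (by linarith)
    have h2 := intervalIntegrable_one_div_log (a := N) (b := x) (by linarith) (by linarith)
    have := intervalIntegral.integral_add_adjacent_intervals h1 h2
    unfold li
    linarith [this]
  have hbound : (∫ t in N..x, 1 / Real.log t) ≤ n / u := by
    rcases le_total x N with hc | hc
    · have hneg : (∫ t in N..x, 1 / Real.log t) ≤ 0 := by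
        rw [intervalIntegral.integral_symm]
        have : (0:ℝ) ≤ ∫ t in x..N, 1 / Real.log t := by
          apply intervalIntegral.integral_nonneg hc
          intro t ht
          have h1t : 1 < t := lt_of_lt_of_le one_lt_two (le_trans hx2 ht.1)
          have := Real.log_pos h1t
          positivity
        linarith
      have : (0:ℝ) ≤ (n:ℝ) / u := by positivity
      linarith
    · have hmono : (∫ t in N..x, 1 / Real.log t) ≤ ∫ t in N..x, 1 / u := by
        apply intervalIntegral.integral_mono_on hc
          (intervalIntegrable_one_div_log (by linarith) (by linarith))
          (intervalIntegrable_const)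
        intro t ht
        have hlogN : Real.log N = u := Real.log_exp u
        have hlt : u ≤ Real.log t := by
          rw [← hlogN]
          exact Real.log_le_log (by linarith) ht.1
        exact one_div_le_one_div_of_le hu0 hlt
      have hconst : (∫ t in N..x, (1:ℝ) / u) = (x - N) * (1 / u) := by
        simp [intervalIntegral.integral_const, smul_eq_mul]
      have hxn : x - N ≤ (n:ℝ) := by linarith
      have : (x - N) * (1 / u) ≤ (n:ℝ) * (1 / u) := by
        apply mul_le_mul_of_nonneg_right hxn; positivity
      calc (∫ t in N..x, 1 / Real.log t) ≤ (x - N) * (1 / u) := by rw [← hconst]; exact hmono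
        _ ≤ (n:ℝ) * (1 / u) := this
        _ = n / u := by ring
  -- combine
  have hnM : (n:ℝ) ≤ M * u := by
    calc (n:ℝ) ≤ (⌊M * u⌋₊ : ℝ) := by exact_mod_cast hn
      _ ≤ M * u := Nat.floor_le (by positivity)
  have hnu : (n:ℝ) / u ≤ M := by
    rw [div_le_iff₀ hu0]; linarith
  have : li x ≤ li N + n / u := by linarith
  have hfinal : primePi x - li x > 0 := by linarith
  linarith
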